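/- Fix x₀ in (0, π/2) and let a = -log(cos x₀)/x₀². Then for all x in (0, x₀), e^(-a·x²) < cos x. -/

import Mathlib

open Real Set

noncomputable def g (x : ℝ) : ℝ := x * Real.tan x + 2 * Real.log (Real.cos x)

lemma cos_pos_of_Ioo {x : ℝ} (hx : x ∈ Set.Ioo 0 (Real.pi/2)) : 0 < Real.cos x :=
  Real.cos_pos_of_mem_Ioo ⟨by linarith [hx.1, Real.pi_pos], hx.2⟩

lemma g_hasDeriv {x : ℝ} (hc : Real.cos x ≠ 0) :
    HasDerivAt g (Real.tan x + x * (1 / Real.cos x ^ 2) + 2 * (-Real.sin x / Real.cos x)) x := by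
  have h1 : HasDerivAt (fun x : ℝ => x * Real.tan x) (1 * Real.tan x + x * (1 / Real.cos x ^ 2)) x :=
    (hasDerivAt_id x).mul (Real.hasDerivAt_tan hc)
  have h2 : HasDerivAt (fun x : ℝ => Real.log (Real.cos x)) (-Real.sin x / Real.cos x) x :=
    (Real.hasDerivAt_cos x).log hc
  have := h1.add (h2.const_mul 2)
  have hg : g = (fun x : ℝ => x * Real.tan x) + fun y => 2 * Real.log (Real.cos y) := rfl
  rw [hg]
  simpa [mul_comm] using this

lemma g_pos {x : ℝ} (hx : x ∈ Set.Ioo 0 (Real.pi/2)) : 0 < g x := by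
  have hg0 : g 0 = 0 := by simp [g]
  have hmono : StrictMonoOn g (Set.Ico 0 (Real.pi/2)) := by
    apply strictMonoOn_of_deriv_pos (convex_Ico _ _)
    · intro y hy
      have hc : 0 < Real.cos y :=
        Real.cos_pos_of_mem_Ioo ⟨by linarith [hy.1, Real.pi_pos], lt_of_lt_of_le hy.2 (le_refl _)⟩
      exact ((g_hasDeriv hc.ne').continuousAt).continuousWithinAt
    · intro y hy
      rw [interior_Ico] at hy
      have hc : 0 < Real.cos y := cos_pos_of_Ioo hy
      rw [(g_hasDeriv hc.ne').deriv]
      have hsin : Real.sin y < y := Real.sin_lt hy.1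
      have hsinpos : 0 < Real.sin y := Real.sin_pos_of_pos_of_lt_pi hy.1 (by linarith [Real.pi_pos, hy.2])
      rw [Real.tan_eq_sin_div_cos]
      have key : Real.sin y * Real.cos y < y := by
        nlinarith [Real.cos_le_one y]
      have h2 : Real.sin y / Real.cos y + y * (1 / Real.cos y ^ 2) + 2 * (-Real.sin y / Real.cos y)
          = (y - Real.sin y * Real.cos y) / Real.cos y ^ 2 := by
        field_simp
        ring
      rw [h2]
      exact div_pos (by linarith) (by positivity)
  have := hmono ⟨le_refl 0, by linarith [Real.pi_pos, hx.2]⟩ ⟨hx.1.le, hx.2⟩ hx.1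
  rwa [hg0] at this

lemma f_hasDeriv {x : ℝ} (hx : x ∈ Set.Ioo 0 (Real.pi/2)) :
    HasDerivAt (fun x => Real.log (Real.cos x) / x ^ 2)
      ((-Real.sin x / Real.cos x * x ^ 2 - Real.log (Real.cos x) * (2 * x)) / (x ^ 2) ^ 2) x := by
  have hc : 0 < Real.cos x := cos_pos_of_Ioo hx
  have h1 : HasDerivAt (fun x : ℝ => Real.log (Real.cos x)) (-Real.sin x / Real.cos x) x :=
    (Real.hasDerivAt_cos x).log hc.ne'
  have h2 : HasDerivAt (fun x : ℝ => x ^ 2) (2 * x) x := by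
    simpa using hasDerivAt_pow 2 x
  exact h1.div h2 (pow_ne_zero 2 hx.1.ne')

lemma f_anti : StrictAntiOn (fun x => Real.log (Real.cos x) / x ^ 2) (Set.Ioo 0 (Real.pi/2)) := by
  apply strictAntiOn_of_deriv_neg (convex_Ioo _ _)
  · intro y hy
    exact ((f_hasDeriv hy).continuousAt).continuousWithinAt
  · intro y hy
    rw [interior_Ioo] at hy
    rw [(f_hasDeriv hy).deriv]
    have hc : 0 < Real.cos y := cos_pos_of_Ioo hy
    have hg := g_pos hy
    have hnum : -Real.sin y / Real.cos y * y ^ 2 - Real.log (Real.cos y) * (2 * y) < 0 := by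
      have : g y = y * (Real.sin y / Real.cos y) + 2 * Real.log (Real.cos y) := by
        rw [g, Real.tan_eq_sin_div_cos]
      rw [this] at hg
      have h3 : -Real.sin y / Real.cos y * y ^ 2 - Real.log (Real.cos y) * (2 * y)
          = -(y * (y * (Real.sin y / Real.cos y) + 2 * Real.log (Real.cos y))) := by ring
      rw [h3]
      exact neg_neg_iff_pos.mpr (mul_pos hy.1 hg)
    have hden : (0:ℝ) < (y ^ 2) ^ 2 := pow_pos (pow_pos hy.1 2) 2
    exact div_neg_of_neg_of_pos hnum hden

theorem stmt_8 (x₀ : ℝ) (hx₀ : x₀ ∈ Set.Ioo (0:ℝ) (Real.pi/2)) :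
    ∀ x ∈ Set.Ioo 0 x₀, Real.exp (-(-Real.log (Real.cos x₀) / x₀^2) * x^2) < Real.cos x := by
  intro x hx
  have hxI : x ∈ Set.Ioo 0 (Real.pi/2) := ⟨hx.1, lt_trans hx.2 hx₀.2⟩
  have hcx : 0 < Real.cos x := cos_pos_of_Ioo hxI
  have hanti := f_anti hxI hx₀ hx.2
  -- hanti : log cos x₀ / x₀² < log cos x / x²
  have hx2 : (0:ℝ) < x ^ 2 := pow_pos hx.1 2
  have hlt : Real.log (Real.cos x₀) / x₀ ^ 2 * x ^ 2 < Real.log (Real.cos x) := by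
    have h := mul_lt_mul_of_pos_right hanti hx2
    rwa [div_mul_cancel₀ _ hx2.ne'] at h
  have heq : -(-Real.log (Real.cos x₀) / x₀^2) * x^2 = Real.log (Real.cos x₀) / x₀ ^ 2 * x ^ 2 := by
    ring
  rw [heq]
  calc Real.exp (Real.log (Real.cos x₀) / x₀ ^ 2 * x ^ 2)
      < Real.exp (Real.log (Real.cos x)) := Real.exp_lt_exp.mpr hlt
    _ = Real.cos x := Real.exp_log hcx
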